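/- arXiv:2301.05045 — 7 statements merged into one kernel-verified Lean document; each statement's English description precedes it below -/
import Mathlib

section
/- If a frame Φ for a finite-dimensional Hilbert space does phase retrieval, then its canonical dual frame {S_Φ^{-1} φ_i} also does phase retrieval. -/
/-- Phase retrieval property. -/
def DoesPhaseRetrieval {𝕜 H : Type*} [RCLike 𝕜] [NormedAddCommGroup H]
    [InnerProductSpace 𝕜 H] {ι : Type*} (φ : ι → H) : Prop :=
  ∀ f g : H, (∀ i, ‖(inner 𝕜 f (φ i) : 𝕜)‖ = ‖(inner 𝕜 g (φ i) : 𝕜)‖) →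
    ∃ θ : 𝕜, ‖θ‖ = 1 ∧ f = θ • g

/-- if a frame `φ` does phase retrieval, then its canonical dual
`{S_φ⁻¹ φ i}` (characterized by `S_φ (ψ i) = φ i`) does phase retrieval. -/
theorem canonicalDual_phaseRetrieval {𝕜 H : Type*} [RCLike 𝕜]
    [NormedAddCommGroup H] [InnerProductSpace 𝕜 H] [FiniteDimensional 𝕜 H]
    {ι : Type*} [Fintype ι] (φ ψ : ι → H)
    (hframe : Submodule.span 𝕜 (Set.range φ) = ⊤)
    (hψ : ∀ i, ∑ j, (inner 𝕜 (φ j) (ψ i) : 𝕜) • φ j = φ i)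
    (hPR : DoesPhaseRetrieval (𝕜 := 𝕜) φ) :
    DoesPhaseRetrieval (𝕜 := 𝕜) ψ := by
  -- the frame operator
  set S : H →ₗ[𝕜] H :=
    { toFun := fun x => ∑ j, (inner 𝕜 (φ j) x : 𝕜) • φ j
      map_add' := by
        intro x y
        simp [inner_add_right, add_smul, Finset.sum_add_distrib]
      map_smul' := by
        intro c x
        simp [inner_smul_right, smul_smul, Finset.smul_sum] } with hS
  have hSapp : ∀ x, S x = ∑ j, (inner 𝕜 (φ j) x : 𝕜) • φ j := fun x => rfl
  -- S is self-adjoint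
  have hsa : ∀ x y : H, (inner 𝕜 (S x) y : 𝕜) = inner 𝕜 x (S y) := by
    intro x y
    simp only [hSapp, sum_inner, inner_sum, inner_smul_left, inner_smul_right]
    refine Finset.sum_congr rfl fun j _ => ?_
    rw [← inner_conj_symm x (φ j)]
    ring_nf
  -- S is injective
  have hinj : Function.Injective S := by
    intro x y hxy
    have h0 : S (x - y) = 0 := by rw [map_sub, hxy, sub_self]
    have hz : ∀ j, (inner 𝕜 (φ j) (x - y) : 𝕜) = 0 := by
      have hin : (inner 𝕜 (x - y) (S (x - y)) : 𝕜) = 0 := by rw [h0, inner_zero_right]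
      rw [hSapp, inner_sum] at hin
      have : ∀ j, (inner 𝕜 (x - y) ((inner 𝕜 (φ j) (x - y) : 𝕜) • φ j) : 𝕜)
          = (‖(inner 𝕜 (φ j) (x - y) : 𝕜)‖ : 𝕜) ^ 2 := by
        intro j
        rw [inner_smul_right, ← inner_conj_symm (x - y) (φ j), RCLike.mul_conj]
      rw [Finset.sum_congr rfl fun j _ => this j] at hin
      have hre : ∑ j, ‖(inner 𝕜 (φ j) (x - y) : 𝕜)‖ ^ 2 = 0 := by
        exact_mod_cast hin
      intro j
      have := (Finset.sum_eq_zero_iff_of_nonneg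
        (fun j _ => by positivity)).mp hre j (Finset.mem_univ j)
      have hn : ‖(inner 𝕜 (φ j) (x - y) : 𝕜)‖ = 0 := by
        nlinarith [norm_nonneg (inner 𝕜 (φ j) (x - y) : 𝕜)]
      exact norm_eq_zero.mp hn
    have hmem : x - y ∈ (Submodule.span 𝕜 (Set.range φ))ᗮ := by
      rw [Submodule.mem_orthogonal]
      intro u hu
      induction hu using Submodule.span_induction with
      | mem u hu =>
        obtain ⟨j, rfl⟩ := hu
        rw [hz j]
      | zero => simp
      | add u v _ _ hu hv => rw [inner_add_left, hu, hv, add_zero]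
      | smul c u _ hu => rw [inner_smul_left, hu, mul_zero]
    rw [hframe, Submodule.top_orthogonal_eq_bot, Submodule.mem_bot, sub_eq_zero] at hmem
    exact hmem
  have hsurj : Function.Surjective S := (LinearMap.injective_iff_surjective).mp hinj
  intro f g hfg
  obtain ⟨f', rfl⟩ := hsurj f
  obtain ⟨g', rfl⟩ := hsurj g
  have key : ∀ (x : H) i, (inner 𝕜 (S x) (ψ i) : 𝕜) = inner 𝕜 x (φ i) := by
    intro x i
    rw [hsa, hSapp, hψ i]
  have : ∀ i, ‖(inner 𝕜 f' (φ i) : 𝕜)‖ = ‖(inner 𝕜 g' (φ i) : 𝕜)‖ := by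
    intro i
    rw [← key f' i, ← key g' i]
    exact hfg i
  obtain ⟨θ, hθ, hfg'⟩ := hPR f' g' this
  exact ⟨θ, hθ, by rw [hfg', map_smul]⟩
end

section
/- A family Φ = {φ_i}_{i∈I} in a finite-dimensional real Hilbert space H does phase retrieval if and only if Φ has the complement property: for every subset σ ⊆ I, either {φ_i}_{i∈σ} spans H or {φ_i}_{i∈σ^c} spans H. -/
/-- A vector orthogonal to every element of a set lies in the orthogonal
complement of its span. -/
lemma mem_orthogonal_span_of_forall {H : Type*} [NormedAddCommGroup H]
    [InnerProductSpace ℝ H] {S : Set H} {x : H}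
    (h : ∀ y ∈ S, (inner ℝ y x : ℝ) = 0) :
    x ∈ (Submodule.span ℝ S)ᗮ := by
  rw [Submodule.mem_orthogonal]
  intro u hu
  induction hu using Submodule.span_induction with
  | mem y hy => exact h y hy
  | zero => simp
  | add a b _ _ ha hb => simp [inner_add_left, ha, hb]
  | smul c a _ ha => simp [inner_smul_left, ha]

/-- in a finite-dimensional real Hilbert space, a family does
phase retrieval iff it has the complement property. -/
theorem phaseRetrieval_iff_complementProperty {H : Type*} [NormedAddCommGroup H]
    [InnerProductSpace ℝ H] [FiniteDimensional ℝ H] {ι : Type*} [Fintype ι]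
    (φ : ι → H) :
    (∀ f g : H, (∀ i, |(inner ℝ f (φ i) : ℝ)| = |(inner ℝ g (φ i) : ℝ)|) →
        f = g ∨ f = -g) ↔
      ∀ σ : Set ι, Submodule.span ℝ (φ '' σ) = ⊤ ∨
        Submodule.span ℝ (φ '' σᶜ) = ⊤ := by
  constructor
  · intro hPR σ
    by_contra hcon
    push_neg at hcon
    obtain ⟨h1, h2⟩ := hcon
    -- pick nonzero vectors in the orthogonal complements
    have hu : ∃ u : H, u ≠ 0 ∧ u ∈ (Submodule.span ℝ (φ '' σ))ᗮ := by
      have : (Submodule.span ℝ (φ '' σ))ᗮ ≠ ⊥ := by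
        intro hb; exact h1 (Submodule.orthogonal_eq_bot_iff.mp hb)
      obtain ⟨u, hu, hne⟩ := Submodule.exists_mem_ne_zero_of_ne_bot this
      exact ⟨u, hne, hu⟩
    have hv : ∃ v : H, v ≠ 0 ∧ v ∈ (Submodule.span ℝ (φ '' σᶜ))ᗮ := by
      have : (Submodule.span ℝ (φ '' σᶜ))ᗮ ≠ ⊥ := by
        intro hb; exact h2 (Submodule.orthogonal_eq_bot_iff.mp hb)
      obtain ⟨v, hv, hne⟩ := Submodule.exists_mem_ne_zero_of_ne_bot this
      exact ⟨v, hne, hv⟩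
    obtain ⟨u, hu0, hu⟩ := hu
    obtain ⟨v, hv0, hv⟩ := hv
    have key : ∀ i, |(inner ℝ (u + v) (φ i) : ℝ)| = |(inner ℝ (u - v) (φ i) : ℝ)| := by
      intro i
      by_cases hi : i ∈ σ
      · have : (inner ℝ u (φ i) : ℝ) = 0 := by
          have := hu (φ i) (Submodule.subset_span ⟨i, hi, rfl⟩)
          rwa [real_inner_comm] at this
        rw [inner_add_left, inner_sub_left, this]
        simp [abs_neg]
      · have : (inner ℝ v (φ i) : ℝ) = 0 := by
          have := hv (φ i) (Submodule.subset_span ⟨i, hi, rfl⟩)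
          rwa [real_inner_comm] at this
        rw [inner_add_left, inner_sub_left, this]
        simp
    rcases hPR (u + v) (u - v) key with h | h
    · apply hv0
      have hvv : v = -v := by
        rw [sub_eq_add_neg] at h
        exact add_left_cancel h
      have h2 : (2 : ℝ) • v = 0 := by
        rw [two_smul]
        nth_rewrite 1 [hvv]
        simp
      simpa using h2
    · apply hu0
      have huu : u = -u := by
        rw [neg_sub, sub_eq_add_neg, add_comm v (-u)] at h
        exact add_right_cancel h
      have h2 : (2 : ℝ) • u = 0 := by
        rw [two_smul]
        nth_rewrite 1 [huu]
        simp
      simpa using h2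
  · intro hCP f g habs
    set σ : Set ι := {i | (inner ℝ f (φ i) : ℝ) = inner ℝ g (φ i)} with hσ
    have hsplit : ∀ i, i ∈ σ ∨ (inner ℝ f (φ i) : ℝ) = -inner ℝ g (φ i) := by
      intro i
      rcases abs_eq_abs.mp (habs i) with h | h
      · exact Or.inl h
      · exact Or.inr h
    rcases hCP σ with h | h
    · left
      have hmem : f - g ∈ (Submodule.span ℝ (φ '' σ))ᗮ := by
        apply mem_orthogonal_span_of_forall
        rintro y ⟨i, hi, rfl⟩
        rw [real_inner_comm, inner_sub_left, hi]
        ring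
      rw [h, Submodule.top_orthogonal_eq_bot, Submodule.mem_bot] at hmem
      linear_combination (norm := abel_nf) hmem
    · have hmem : f + g ∈ (Submodule.span ℝ (φ '' σᶜ))ᗮ := by
        apply mem_orthogonal_span_of_forall
        rintro y ⟨i, hi, rfl⟩
        rcases hsplit i with h' | h'
        · exact absurd h' hi
        · rw [real_inner_comm, inner_add_left, h']
          ring
      rw [h, Submodule.top_orthogonal_eq_bot, Submodule.mem_bot] at hmem
      right
      linear_combination (norm := abel_nf) hmem
end

section
/- If Φ = {φ_i}_{i∈I_m} does phase retrieval in ℝ^n, then m ≥ 2n - 1. -/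
open Submodule

/-- If a finite set of indices has fewer than `n` elements, there is a nonzero
vector orthogonal to all the corresponding `φ i`. -/
lemma aux_perp_exists {m n : ℕ} (φ : Fin m → EuclideanSpace ℝ (Fin n))
    (T : Finset (Fin m)) (hT : T.card < n) :
    ∃ u : EuclideanSpace ℝ (Fin n), u ≠ 0 ∧ ∀ i ∈ T, (inner ℝ u (φ i) : ℝ) = 0 := by
  classical
  set K : Submodule ℝ (EuclideanSpace ℝ (Fin n)) := span ℝ ((T.image φ : Finset _) : Set _)
    with hKdef
  have hK : K ≠ ⊤ := by
    intro h
    have h1 : Module.finrank ℝ K ≤ T.card := by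
      calc Module.finrank ℝ K ≤ (T.image φ).card := finrank_span_finset_le_card _
        _ ≤ T.card := Finset.card_image_le
    have h2 : Module.finrank ℝ K = n := by
      rw [h, finrank_top, finrank_euclideanSpace_fin]
    omega
  have hbot : Kᗮ ≠ ⊥ := fun h => hK (Submodule.orthogonal_eq_bot_iff.mp h)
  obtain ⟨u, hu, hu0⟩ := Submodule.exists_mem_ne_zero_of_ne_bot hbot
  refine ⟨u, hu0, fun i hi => ?_⟩
  have hmem : φ i ∈ K := subset_span (by
    simp only [Finset.coe_image, Set.mem_image, Finset.mem_coe]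
    exact ⟨i, hi, rfl⟩)
  have := (Submodule.mem_orthogonal K u).mp hu (φ i) hmem
  rwa [real_inner_comm] at this

/-- if `{φ i}_{i=1}^m` does phase retrieval in `ℝ^n`,
then `m ≥ 2n - 1`. -/
theorem phaseRetrieval_card_lower_bound {m n : ℕ}
    (φ : Fin m → EuclideanSpace ℝ (Fin n))
    (hPR : ∀ x y : EuclideanSpace ℝ (Fin n),
      (∀ i, |(inner ℝ x (φ i) : ℝ)| = |(inner ℝ y (φ i) : ℝ)|) → x = y ∨ x = -y) :
    2 * n - 1 ≤ m := by
  by_contra hcon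
  push_neg at hcon
  have hn : 1 ≤ n := by omega
  set S : Finset (Fin m) := Finset.univ.filter (fun i => (i : ℕ) < n - 1) with hSdef
  have hS : S.card < n := by
    have h1 : S.card ≤ (Finset.range (n - 1)).card := by
      refine Finset.card_le_card_of_injOn (fun i => (i : ℕ)) ?_ ?_
      · intro i hi
        simp only [hSdef, Finset.mem_coe, Finset.mem_filter] at hi
        simpa using hi.2
      · intro a _ b _ hab
        exact Fin.val_injective hab
    rw [Finset.card_range] at h1
    omega
  have hSc : Sᶜ.card < n := by
    have h1 : Sᶜ.card ≤ (Finset.range (m - (n - 1))).card := by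
      refine Finset.card_le_card_of_injOn (fun i => (i : ℕ) - (n - 1)) ?_ ?_
      · intro i hi
        simp only [hSdef, Finset.mem_coe, Finset.mem_compl, Finset.mem_filter, Finset.mem_univ,
          true_and, not_lt] at hi
        have : (i : ℕ) < m := i.isLt
        simp only [Finset.mem_coe, Finset.mem_range]
        omega
      · intro a ha b hb hab
        simp only [hSdef, Finset.mem_coe, Finset.mem_compl, Finset.mem_filter,
          Finset.mem_univ, true_and, not_lt] at ha hb
        have hab' : (a : ℕ) - (n - 1) = (b : ℕ) - (n - 1) := hab
        apply Fin.val_injective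
        omega
    rw [Finset.card_range] at h1
    omega
  obtain ⟨u, hu0, hu⟩ := aux_perp_exists φ S hS
  obtain ⟨v, hv0, hv⟩ := aux_perp_exists φ Sᶜ hSc
  have key : ∀ i, |(inner ℝ (u + v) (φ i) : ℝ)| = |(inner ℝ (u - v) (φ i) : ℝ)| := by
    intro i
    rw [inner_add_left, inner_sub_left]
    by_cases hi : i ∈ S
    · rw [hu i hi]; simp
    · rw [hv i (Finset.mem_compl.mpr hi)]; simp
  rcases hPR _ _ key with h1 | h1
  · apply hv0
    have h3 := sub_eq_zero_of_eq h1
    rw [show u + v - (u - v) = v + v by abel, ← two_smul ℝ v] at h3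
    exact (smul_eq_zero.mp h3).resolve_left (by norm_num)
  · apply hu0
    have h3 := sub_eq_zero_of_eq h1
    rw [show u + v - -(u - v) = u + u by abel, ← two_smul ℝ u] at h3
    exact (smul_eq_zero.mp h3).resolve_left (by norm_num)
end

section
/- If Φ = {φ_i}_{i=1}^m is a full spark family in ℝ^n with m ≥ 2n - 1, then Φ does phase retrieval. -/
/-- A family of `m ≥ n` vectors in `ℝ^n` is full spark if every `n` of its
vectors are linearly independent. -/
def FullSpark {m n : ℕ} (φ : Fin m → EuclideanSpace ℝ (Fin n)) : Prop :=
  ∀ s : Finset (Fin m), s.card = n →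
    LinearIndependent ℝ (fun i : s => φ i)

lemma fullSpark_aux {m n : ℕ} (φ : Fin m → EuclideanSpace ℝ (Fin n))
    (hfs : FullSpark φ) (z : EuclideanSpace ℝ (Fin n)) (s : Finset (Fin m))
    (hs : s.card = n) (hz : ∀ i ∈ s, (inner ℝ z (φ i) : ℝ) = 0) : z = 0 := by
  have hli := hfs s hs
  have hspan : Submodule.span ℝ (Set.range fun i : s => φ i) = ⊤ :=
    hli.span_eq_top_of_card_eq_finrank' (by simp [hs])
  have hmem : z ∈ (Submodule.span ℝ (Set.range fun i : s => φ i))ᗮ := by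
    rw [Submodule.mem_orthogonal]
    intro u hu
    induction hu using Submodule.span_induction with
    | mem v hv =>
      obtain ⟨i, rfl⟩ := hv
      rw [real_inner_comm]
      exact hz i i.2
    | zero => simp
    | add a b _ _ ha hb => rw [inner_add_left, ha, hb, add_zero]
    | smul c a _ ha => rw [inner_smul_left, ha, mul_zero]
  rw [hspan] at hmem
  have : (inner ℝ z z : ℝ) = 0 := (Submodule.mem_orthogonal _ z).1 hmem z trivial
  exact inner_self_eq_zero.mp this

/-- a full spark family of `m ≥ 2n - 1` vectors in `ℝ^n`
does phase retrieval. -/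
theorem fullSpark_phaseRetrieval {m n : ℕ}
    (φ : Fin m → EuclideanSpace ℝ (Fin n))
    (hm : 2 * n - 1 ≤ m) (hfs : FullSpark φ) :
    ∀ x y : EuclideanSpace ℝ (Fin n),
      (∀ i, |(inner ℝ x (φ i) : ℝ)| = |(inner ℝ y (φ i) : ℝ)|) → x = y ∨ x = -y := by
  intro x y h
  rcases Nat.eq_zero_or_pos n with hn | hn
  · left
    subst hn
    exact Subsingleton.elim x y
  set S : Finset (Fin m) := Finset.univ.filter (fun i => (inner ℝ x (φ i) : ℝ) = inner ℝ y (φ i))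
  set T : Finset (Fin m) := Finset.univ.filter (fun i => (inner ℝ x (φ i) : ℝ) = -inner ℝ y (φ i))
  have hcover : S ∪ T = Finset.univ := by
    ext i
    simp only [S, T, Finset.mem_union, Finset.mem_filter, Finset.mem_univ, true_and, iff_true]
    exact abs_eq_abs.mp (h i)
  have hbig : n ≤ S.card ∨ n ≤ T.card := by
    by_contra hc
    push_neg at hc
    have h1 : m ≤ S.card + T.card := by
      calc m = (S ∪ T).card := by rw [hcover]; simp
        _ ≤ S.card + T.card := Finset.card_union_le _ _
    omega
  rcases hbig with hS | hT
  · left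
    obtain ⟨t, hts, htc⟩ := Finset.exists_subset_card_eq hS
    have hz : ∀ i ∈ t, (inner ℝ (x - y) (φ i) : ℝ) = 0 := by
      intro i hi
      have := (Finset.mem_filter.mp (hts hi)).2
      rw [inner_sub_left, this, sub_self]
    have := fullSpark_aux φ hfs (x - y) t htc hz
    linear_combination (norm := abel) this
  · right
    obtain ⟨t, hts, htc⟩ := Finset.exists_subset_card_eq hT
    have hz : ∀ i ∈ t, (inner ℝ (x + y) (φ i) : ℝ) = 0 := by
      intro i hi
      have := (Finset.mem_filter.mp (hts hi)).2
      rw [inner_add_left, this, neg_add_cancel]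
    have := fullSpark_aux φ hfs (x + y) t htc hz
    linear_combination (norm := abel) this
end

section
/- A family Φ = {φ_i}_{i=1}^{2n-1} in ℝ^n does phase retrieval if and only if Φ is full spark. -/
open Submodule

/-- If a nonzero vector is orthogonal to `n` linearly independent vectors in `ℝ^n`,
it is zero. -/
private lemma auxA {n m : ℕ} (φ : Fin m → EuclideanSpace ℝ (Fin n)) (s : Finset (Fin m))
    (hcard : s.card = n) (hli : LinearIndependent ℝ (fun i : s => φ i))
    (z : EuclideanSpace ℝ (Fin n)) (hz : ∀ i ∈ s, (inner ℝ z (φ i) : ℝ) = 0) : z = 0 := by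
  have hspan : span ℝ (Set.range (fun i : s => φ i)) = ⊤ :=
    hli.span_eq_top_of_card_eq_finrank' (by simp [hcard])
  have hle : span ℝ (Set.range (fun i : s => φ i)) ≤ (ℝ ∙ z)ᗮ := by
    rw [span_le]
    rintro _ ⟨i, rfl⟩
    exact mem_orthogonal_singleton_iff_inner_left.mpr
      (by rw [real_inner_comm]; exact hz i i.2)
  rw [hspan, top_le_iff] at hle
  have : (ℝ ∙ z) = ⊥ := by
    have := congrArg Submodule.orthogonal hle
    rwa [Submodule.orthogonal_orthogonal, Submodule.top_orthogonal_eq_bot] at this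
  simpa [Submodule.span_singleton_eq_bot] using this

/-- If a family of vectors does not span, there is a nonzero orthogonal vector. -/
private lemma auxB0 {n m : ℕ} (φ : Fin m → EuclideanSpace ℝ (Fin n)) (s : Finset (Fin m))
    (hlt : span ℝ (φ '' s) ≠ ⊤) :
    ∃ z : EuclideanSpace ℝ (Fin n), z ≠ 0 ∧ ∀ i ∈ s, (inner ℝ z (φ i) : ℝ) = 0 := by
  have hne : (span ℝ (φ '' s))ᗮ ≠ ⊥ := by
    rw [Ne, Submodule.orthogonal_eq_bot_iff]
    exact hlt
  obtain ⟨z, hzK, hz0⟩ := Submodule.exists_mem_ne_zero_of_ne_bot hne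
  refine ⟨z, hz0, fun i hi => ?_⟩
  have := (Submodule.mem_orthogonal _ _).mp hzK (φ i) (subset_span ⟨i, hi, rfl⟩)
  rwa [real_inner_comm] at this

/-- Fewer than `n` vectors in `ℝ^n` admit a nonzero orthogonal vector. -/
private lemma auxB {n m : ℕ} (φ : Fin m → EuclideanSpace ℝ (Fin n)) (s : Finset (Fin m))
    (hcard : s.card < n) :
    ∃ z : EuclideanSpace ℝ (Fin n), z ≠ 0 ∧ ∀ i ∈ s, (inner ℝ z (φ i) : ℝ) = 0 := by
  classical
  have : Fintype ↑(φ '' (s : Set (Fin m))) :=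
    Set.Finite.fintype ((s : Set (Fin m)).toFinite.image φ)
  apply auxB0
  apply ne_top_of_lt
  apply span_lt_top_of_card_lt_finrank
  calc (φ '' ↑s).toFinset.card ≤ s.card := by
        rw [Set.toFinset_card]
        rw [← Nat.card_eq_fintype_card, Nat.card_coe_set_eq]
        calc (φ '' ↑s).ncard ≤ (↑s : Set (Fin m)).ncard := Set.ncard_image_le (Set.toFinite _)
          _ = s.card := Set.ncard_coe_finset s
    _ < n := hcard
    _ = Module.finrank ℝ (EuclideanSpace ℝ (Fin n)) := by simp



/-- a family of `2n - 1` vectors in `ℝ^n` does phase retrieval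
iff it is full spark. -/
theorem phaseRetrieval_iff_fullSpark {n : ℕ}
    (φ : Fin (2 * n - 1) → EuclideanSpace ℝ (Fin n)) :
    (∀ x y : EuclideanSpace ℝ (Fin n),
        (∀ i, |(inner ℝ x (φ i) : ℝ)| = |(inner ℝ y (φ i) : ℝ)|) → x = y ∨ x = -y)
      ↔ FullSpark φ := by
  classical
  constructor
  · -- phase retrieval → full spark
    intro hPR s hcard
    rcases Nat.eq_zero_or_pos n with hn | hn
    · subst hn
      have hs : s = ∅ := Finset.card_eq_zero.mp hcard
      subst hs
      haveI : IsEmpty ((∅ : Finset (Fin (2 * 0 - 1))) : Type) :=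
        ⟨fun i => Finset.notMem_empty _ i.2⟩
      exact linearIndependent_empty_type
    · by_contra hdep
      -- the vectors indexed by s do not span
      have hne : span ℝ (φ '' s) ≠ ⊤ := by
        intro htop
        apply hdep
        have hr : (φ '' s) = Set.range (fun i : s => φ i) := Set.image_eq_range φ s
        rw [linearIndependent_iff_card_eq_finrank_span]
        have h1 : (Set.range (fun i : s => φ i)).finrank ℝ = n := by
          rw [Set.finrank, ← hr, htop]
          simp
        simp [h1, hcard]
      obtain ⟨u, hu0, hu⟩ := auxB0 φ s hne
      obtain ⟨v, hv0, hv⟩ := auxB φ sᶜ (by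
        have := Finset.card_compl s
        simp [hcard] at this
        omega)
      have key : ∀ i, |(inner ℝ (u + v) (φ i) : ℝ)| = |(inner ℝ (u - v) (φ i) : ℝ)| := by
        intro i
        by_cases hi : i ∈ s
        · rw [inner_add_left, inner_sub_left, hu i hi]
          simp [abs_neg]
        · rw [inner_add_left, inner_sub_left, hv i (Finset.mem_compl.mpr hi)]
          simp
      rcases hPR (u + v) (u - v) key with h | h
      · apply hv0
        rw [sub_eq_add_neg] at h
        have hv : v = -v := add_left_cancel h
        have h2 : (2 : ℝ) • v = 0 := by
          rw [two_smul, add_eq_zero_iff_eq_neg]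
          exact hv
        exact (smul_eq_zero.mp h2).resolve_left (by norm_num)
      · apply hu0
        rw [neg_sub, sub_eq_add_neg, add_comm u v] at h
        have hu' : u = -u := add_left_cancel h
        have h2 : (2 : ℝ) • u = 0 := by
          rw [two_smul, add_eq_zero_iff_eq_neg]
          exact hu'
        exact (smul_eq_zero.mp h2).resolve_left (by norm_num)
  · -- full spark → phase retrieval
    intro hFS x y hxy
    rcases Nat.eq_zero_or_pos n with hn | hn
    · left
      subst hn
      exact Subsingleton.elim x y
    · set S := Finset.univ.filter (fun i => (inner ℝ (x - y) (φ i) : ℝ) = 0) with hS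
      set T := Finset.univ.filter (fun i => (inner ℝ (x + y) (φ i) : ℝ) = 0) with hT
      have hST : ∀ i, i ∈ S ∨ i ∈ T := by
        intro i
        rcases abs_eq_abs.mp (hxy i) with h | h
        · left
          simp only [hS, Finset.mem_filter, Finset.mem_univ, true_and]
          rw [inner_sub_left, h, sub_self]
        · right
          simp only [hT, Finset.mem_filter, Finset.mem_univ, true_and]
          rw [inner_add_left, h, neg_add_cancel]
      have hcards : n ≤ S.card ∨ n ≤ T.card := by
        by_contra hcon
        push_neg at hcon
        have hunion : (Finset.univ : Finset (Fin (2 * n - 1))).card ≤ (S ∪ T).card :=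
          Finset.card_le_card (fun i _ => Finset.mem_union.mpr (hST i))
        have h1 : (S ∪ T).card ≤ S.card + T.card := Finset.card_union_le S T
        simp only [Finset.card_univ, Fintype.card_fin] at hunion
        omega
      rcases hcards with h | h
      · left
        obtain ⟨t, hts, htc⟩ := Finset.exists_subset_card_eq h
        have hz : x - y = 0 := by
          apply auxA φ t htc (hFS t htc)
          intro i hi
          have := hts hi
          simp only [hS, Finset.mem_filter] at this
          exact this.2
        exact sub_eq_zero.mp hz
      · right
        obtain ⟨t, hts, htc⟩ := Finset.exists_subset_card_eq h
        have hz : x + y = 0 := by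
          apply auxA φ t htc (hFS t htc)
          intro i hi
          have := hts hi
          simp only [hT, Finset.mem_filter] at this
          exact this.2
        exact eq_neg_of_add_eq_zero_left hz
end

section
/- If a family Φ = {φ_i}_{i∈I} in a real Hilbert space H of dimension n does phase retrieval, then Φ satisfies the minimal redundancy condition for (n-1)-erasures: for every subset σ ⊆ I with |σ| = n-1, the family {φ_i}_{i∈σ^c} still spans H. -/
/-- a phase retrieval family in an `n`-dimensional real Hilbert
space satisfies the minimal redundancy condition for `(n-1)`-erasures. -/
theorem phaseRetrieval_MRC {H : Type*} [NormedAddCommGroup H]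
    [InnerProductSpace ℝ H] [FiniteDimensional ℝ H] {ι : Type*} [Fintype ι]
    [DecidableEq ι] (φ : ι → H)
    (hPR : ∀ f g : H, (∀ i, |(inner ℝ f (φ i) : ℝ)| = |(inner ℝ g (φ i) : ℝ)|) →
      f = g ∨ f = -g) :
    ∀ σ : Finset ι, σ.card = Module.finrank ℝ H - 1 →
      Submodule.span ℝ (φ '' ↑(σᶜ)) = ⊤ := by
  classical
  intro σ hσ
  by_contra hne
  -- orthogonal complement of the span of the kept vectors is nonzero
  have horth : (Submodule.span ℝ (φ '' ↑(σᶜ)))ᗮ ≠ ⊥ := by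
    intro h
    exact hne ((Submodule.orthogonal_eq_bot_iff).mp h)
  obtain ⟨u, hu, hu0⟩ := Submodule.ne_bot_iff _ |>.mp horth
  have : Nontrivial H := ⟨u, 0, hu0⟩
  have hn : 1 ≤ Module.finrank ℝ H := Module.finrank_pos
  -- the span of the erased vectors has small rank, so its orthogonal is nonzero
  have hspan_le : Module.finrank ℝ (Submodule.span ℝ (φ '' ↑σ)) ≤ σ.card := by
    rw [← Finset.coe_image]
    exact (finrank_span_finset_le_card (σ.image φ)).trans (Finset.card_image_le)
  have hσtop : Submodule.span ℝ (φ '' ↑σ) ≠ ⊤ := by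
    intro h
    have := hspan_le
    rw [h, finrank_top] at this
    omega
  have horth2 : (Submodule.span ℝ (φ '' ↑σ))ᗮ ≠ ⊥ := by
    intro h
    exact hσtop ((Submodule.orthogonal_eq_bot_iff).mp h)
  obtain ⟨v, hv, hv0⟩ := Submodule.ne_bot_iff _ |>.mp horth2
  have key : ∀ i, |(inner ℝ (u + v) (φ i) : ℝ)| = |(inner ℝ (u - v) (φ i) : ℝ)| := by
    intro i
    by_cases hi : i ∈ σ
    · have hvφ : (inner ℝ v (φ i) : ℝ) = 0 := by
        rw [real_inner_comm]
        exact hv _ (Submodule.subset_span ⟨i, by simpa using hi, rfl⟩)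
      rw [inner_add_left, inner_sub_left, hvφ]
      ring_nf
    · have huφ : (inner ℝ u (φ i) : ℝ) = 0 := by
        rw [real_inner_comm]
        exact hu _ (Submodule.subset_span ⟨i, by simpa using hi, rfl⟩)
      rw [inner_add_left, inner_sub_left, huφ]
      rw [zero_add, zero_sub, abs_neg]
  rcases hPR _ _ key with h | h
  · apply hv0
    have h3 : (2:ℝ) • v = (u + v) - (u - v) := by module
    rw [← h, sub_self] at h3
    exact (smul_eq_zero.mp h3).resolve_left (by norm_num)
  · apply hu0
    have h3 : (2:ℝ) • u = (u + v) + (u - v) := by module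
    rw [h, neg_add_cancel] at h3
    exact (smul_eq_zero.mp h3).resolve_left (by norm_num)
end

section
/- The frame {(1,1), (1,-1)} does weak phase retrieval in ℝ², but does not do phase retrieval. -/
/-- `x` and `y` weakly have the same phase in `ℝ^n`. -/
def WeaklySamePhase {n : ℕ} (x y : EuclideanSpace ℝ (Fin n)) : Prop :=
  ∃ α : ℝ, (α = 1 ∨ α = -1) ∧
    ∀ j, x j ≠ 0 → y j ≠ 0 → Real.sign (x j) = α * Real.sign (y j)

/-- The family `{(1,1), (1,-1)}` in `ℝ²`. -/
noncomputable def Φ : Fin 2 → EuclideanSpace ℝ (Fin 2) :=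
  ![(WithLp.equiv 2 (Fin 2 → ℝ)).symm ![1, 1],
    (WithLp.equiv 2 (Fin 2 → ℝ)).symm ![1, -1]]

lemma sign_sq_aux {a : ℝ} (ha : a ≠ 0) : Real.sign a * Real.sign a = 1 := by
  rcases ha.lt_or_gt with h | h <;>
    simp [Real.sign_of_pos, Real.sign_of_neg, h]

lemma sign_mul_aux {a b : ℝ} (ha : a ≠ 0) (hb : b ≠ 0) :
    Real.sign a * Real.sign b = 1 ∨ Real.sign a * Real.sign b = -1 := by
  rcases ha.lt_or_gt with h1 | h1 <;> rcases hb.lt_or_gt with h2 | h2 <;>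
    simp [Real.sign_of_pos, Real.sign_of_neg, h1, h2]

lemma sign_prod_aux {a b c d : ℝ} (ha : a ≠ 0) (hb : b ≠ 0) (hc : c ≠ 0)
    (hd : d ≠ 0) (h : a * b = c * d) :
    Real.sign a * Real.sign b = Real.sign c * Real.sign d := by
  rcases ha.lt_or_gt with h1 | h1 <;> rcases hb.lt_or_gt with h2 | h2 <;>
    rcases hc.lt_or_gt with h3 | h3 <;> rcases hd.lt_or_gt with h4 | h4 <;>
    simp_all [Real.sign_of_pos, Real.sign_of_neg] <;> nlinarith

/-- `{(1,1), (1,-1)}` does weak phase retrieval in `ℝ²`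
but does not do phase retrieval. -/
theorem example_weak_not_phase :
    (∀ x y : EuclideanSpace ℝ (Fin 2),
      (∀ i, |(inner ℝ x (Φ i) : ℝ)| = |(inner ℝ y (Φ i) : ℝ)|) →
        WeaklySamePhase x y) ∧
    ¬ (∀ x y : EuclideanSpace ℝ (Fin 2),
      (∀ i, |(inner ℝ x (Φ i) : ℝ)| = |(inner ℝ y (Φ i) : ℝ)|) →
        x = y ∨ x = -y) := by
  constructor
  · intro x y h
    have i0 : (inner ℝ x (Φ 0) : ℝ) = x 0 + x 1 := by
      simp [Φ, PiLp.inner_apply, Fin.sum_univ_two, WithLp.equiv_symm_apply, PiLp.toLp_apply]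
    have i1 : (inner ℝ x (Φ 1) : ℝ) = x 0 - x 1 := by
      simp [Φ, PiLp.inner_apply, Fin.sum_univ_two, WithLp.equiv_symm_apply, PiLp.toLp_apply]
      ring
    have j0 : (inner ℝ y (Φ 0) : ℝ) = y 0 + y 1 := by
      simp [Φ, PiLp.inner_apply, Fin.sum_univ_two, WithLp.equiv_symm_apply, PiLp.toLp_apply]
    have j1 : (inner ℝ y (Φ 1) : ℝ) = y 0 - y 1 := by
      simp [Φ, PiLp.inner_apply, Fin.sum_univ_two, WithLp.equiv_symm_apply, PiLp.toLp_apply]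
      ring
    have h0 := h 0; have h1 := h 1
    rw [i0, j0] at h0; rw [i1, j1] at h1
    have e0 : (x 0 + x 1) ^ 2 = (y 0 + y 1) ^ 2 := by
      rw [← sq_abs, ← sq_abs (y 0 + y 1), h0]
    have e1 : (x 0 - x 1) ^ 2 = (y 0 - y 1) ^ 2 := by
      rw [← sq_abs, ← sq_abs (y 0 - y 1), h1]
    have key : x 0 * x 1 = y 0 * y 1 := by nlinarith
    by_cases h00 : x 0 ≠ 0 ∧ y 0 ≠ 0
    · obtain ⟨hx0, hy0⟩ := h00
      refine ⟨Real.sign (x 0) * Real.sign (y 0), sign_mul_aux hx0 hy0, ?_⟩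
      intro j hxj hyj
      fin_cases j
      · show Real.sign (x 0) = Real.sign (x 0) * Real.sign (y 0) * Real.sign (y 0)
        rw [mul_assoc, sign_sq_aux hy0, mul_one]
      · show Real.sign (x 1) = Real.sign (x 0) * Real.sign (y 0) * Real.sign (y 1)
        have hx1 : x 1 ≠ 0 := hxj
        have hy1 : y 1 ≠ 0 := hyj
        have hs := sign_prod_aux hx0 hx1 hy0 hy1 key
        have hsq := sign_sq_aux hx0
        linear_combination Real.sign (x 0) * hs - Real.sign (x 1) * hsq
    · by_cases h11 : x 1 ≠ 0 ∧ y 1 ≠ 0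
      · obtain ⟨hx1, hy1⟩ := h11
        refine ⟨Real.sign (x 1) * Real.sign (y 1), sign_mul_aux hx1 hy1, ?_⟩
        intro j hxj hyj
        fin_cases j
        · exact absurd ⟨hxj, hyj⟩ h00
        · show Real.sign (x 1) = Real.sign (x 1) * Real.sign (y 1) * Real.sign (y 1)
          rw [mul_assoc, sign_sq_aux hy1, mul_one]
      · refine ⟨1, Or.inl rfl, ?_⟩
        intro j hxj hyj
        fin_cases j
        · exact absurd ⟨hxj, hyj⟩ h00
        · exact absurd ⟨hxj, hyj⟩ h11
  · intro h
    set x : EuclideanSpace ℝ (Fin 2) := (WithLp.equiv 2 (Fin 2 → ℝ)).symm ![1, 0] with hx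
    set y : EuclideanSpace ℝ (Fin 2) := (WithLp.equiv 2 (Fin 2 → ℝ)).symm ![0, 1] with hy
    have habs : ∀ i, |(inner ℝ x (Φ i) : ℝ)| = |(inner ℝ y (Φ i) : ℝ)| := by
      intro i
      fin_cases i <;>
        simp [hx, hy, Φ, PiLp.inner_apply, Fin.sum_univ_two,
          WithLp.equiv_symm_apply, PiLp.toLp_apply]
    rcases h x y habs with heq | heq
    · have : x 0 = y 0 := by rw [heq]
      simp [hx, hy, WithLp.equiv_symm_apply, PiLp.toLp_apply] at this
    · have : x 0 = (-y) 0 := by rw [heq]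
      simp [hx, hy, WithLp.equiv_symm_apply, PiLp.toLp_apply] at this
end
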